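/- Let s > 0 and 0 < β ≤ min{s/2, 1}. Let A, B ∈ M_{s,β}^+. Then for all i, j the series ∑_{k≥1} A_i^k B_k^j and ∑_{k≥1} B_i^k A_k^j converge absolutely in operator norm, the products AB and BA belong to M_{s,β}^+, and |AB|_{s,β+} ≤ (2^{s/2+3}/β)·|A|_{s,β+}·|B|_{s,β+} and |BA|_{s,β+} ≤ (2^{s/2+3}/β)·|A|_{s,β+}·|B|_{s,β+}. -/

import Mathlib

/-- The weight `w(i,j) = (√(i∧j) + |i−j|)/√(i∧j)` for positive integers `i, j`. -/
noncomputable def w (i j : ℕ+) : ℝ :=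
  (Real.sqrt (min (i : ℝ) (j : ℝ)) + |(i : ℝ) - (j : ℝ)|) / Real.sqrt (min (i : ℝ) (j : ℝ))

/-- The dimension `2·d_j` of the `j`-th block. -/
def dim (d : ℕ+ → ℕ+) (j : ℕ+) : ℕ := 2 * d j

namespace MsbAux

noncomputable def wr (x y : ℝ) : ℝ :=
  (Real.sqrt (min x y) + |x - y|) / Real.sqrt (min x y)

noncomputable def Wr (s β x y : ℝ) : ℝ :=
  (min x y) ^ β * wr x y ^ s * (1 + |x - y|)

lemma wr_symm (x y : ℝ) : wr x y = wr y x := by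
  unfold wr; rw [min_comm, abs_sub_comm]

lemma Wr_symm (s β x y : ℝ) : Wr s β x y = Wr s β y x := by
  unfold Wr; rw [min_comm, abs_sub_comm, wr_symm]

lemma wr_eq {x y : ℝ} (hxy : x ≤ y) :
    wr x y = (Real.sqrt x + (y - x)) / Real.sqrt x := by
  unfold wr; rw [min_eq_left hxy, abs_sub_comm, abs_of_nonneg (by linarith)]

lemma Wr_eq {x y : ℝ} (hxy : x ≤ y) (s β : ℝ) :
    Wr s β x y = x ^ β * wr x y ^ s * (1 + (y - x)) := by
  unfold Wr; rw [min_eq_left hxy, abs_sub_comm, abs_of_nonneg (by linarith)]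

lemma sqrt_pos' {x : ℝ} (hx : 1 ≤ x) : 0 < Real.sqrt x :=
  Real.sqrt_pos.2 (by linarith)

lemma one_le_sqrt' {x : ℝ} (hx : 1 ≤ x) : 1 ≤ Real.sqrt x := Real.one_le_sqrt.2 hx

lemma sqrt_le_add {x y : ℝ} (hx : 1 ≤ x) (hxy : x ≤ y) :
    Real.sqrt y ≤ Real.sqrt x + (y - x) := by
  have h1 : Real.sqrt x ^ 2 = x := Real.sq_sqrt (by linarith)
  have h2 : Real.sqrt y ^ 2 = y := Real.sq_sqrt (by linarith)
  have h3 : 1 ≤ Real.sqrt x := one_le_sqrt' hx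
  have h4 : Real.sqrt x ≤ Real.sqrt y := Real.sqrt_le_sqrt (by linarith)
  nlinarith [h4]

lemma one_le_wr {x y : ℝ} (hx : 1 ≤ x) (hy : 1 ≤ y) : 1 ≤ wr x y := by
  unfold wr
  have h : 1 ≤ min x y := le_min hx hy
  have hs := sqrt_pos' h
  rw [le_div_iff₀ hs, one_mul]
  have := abs_nonneg (x - y); linarith

lemma one_le_Wr {s β : ℝ} (hs : 0 ≤ s) (hβ : 0 ≤ β) {x y : ℝ} (hx : 1 ≤ x) (hy : 1 ≤ y) :
    1 ≤ Wr s β x y := by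
  unfold Wr
  have h1 : 1 ≤ min x y := le_min hx hy
  have h2 : (1:ℝ) ≤ (min x y) ^ β := Real.one_le_rpow h1 hβ
  have h3 : (1:ℝ) ≤ wr x y ^ s := Real.one_le_rpow (one_le_wr hx hy) hs
  have h4 : (0:ℝ) ≤ |x - y| := abs_nonneg _
  nlinarith [mul_le_mul h2 h3 (by linarith) (by linarith)]

lemma Wr_pos {s β : ℝ} (hs : 0 ≤ s) (hβ : 0 ≤ β) {x y : ℝ} (hx : 1 ≤ x) (hy : 1 ≤ y) :
    0 < Wr s β x y := lt_of_lt_of_le one_pos (one_le_Wr hs hβ hx hy)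

lemma wr_mono1 {a b c : ℝ} (hc : 1 ≤ c) (hca : c ≤ a) (hab : a ≤ b) :
    wr a b ≤ wr c b := by
  have ha : (1:ℝ) ≤ a := le_trans hc hca
  rw [wr_eq hab, wr_eq (le_trans hca hab)]
  have hsc := sqrt_pos' hc
  have hsa := sqrt_pos' ha
  have hsq : Real.sqrt c ≤ Real.sqrt a := Real.sqrt_le_sqrt hca
  rw [div_le_div_iff₀ hsa hsc]
  nlinarith [hsq]

lemma wr_mono2 {a b c : ℝ} (ha : 1 ≤ a) (hab : a ≤ b) (hbc : b ≤ c) :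
    wr a b ≤ wr a c := by
  rw [wr_eq hab, wr_eq (le_trans hab hbc)]
  have hsa := sqrt_pos' ha
  rw [div_le_div_iff₀ hsa hsa]
  nlinarith [hsa]

lemma wr_tri {a b c : ℝ} (ha : 1 ≤ a) (hac : a ≤ c) (hcb : c ≤ b) :
    wr a b ≤ wr a c * wr c b := by
  have hc : (1:ℝ) ≤ c := le_trans ha hac
  rw [wr_eq (le_trans hac hcb), wr_eq hac, wr_eq hcb]
  have hsa := sqrt_pos' ha
  have hsc := sqrt_pos' hc
  rw [div_mul_div_comm, div_le_div_iff₀ hsa (by positivity)]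
  have h1 : Real.sqrt c ≤ Real.sqrt a + (c - a) := sqrt_le_add ha hac
  have key : 0 ≤ (b - c) * ((Real.sqrt a + (c - a)) - Real.sqrt c) :=
    mul_nonneg (by linarith) (by linarith)
  nlinarith [mul_nonneg hsa.le key]

lemma low {s β : ℝ} (hs : 0 ≤ s) (hβ : 0 ≤ β) (hβs : β ≤ s / 2)
    {a c : ℝ} (hc : 1 ≤ c) (hca : c ≤ a) :
    a ^ β ≤ c ^ β * wr c a ^ s := by
  have ha : (1:ℝ) ≤ a := le_trans hc hca
  have hc0 : (0:ℝ) < c := by linarith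
  have hac1 : (1:ℝ) ≤ a / c := (one_le_div hc0).2 hca
  have h1 : Real.sqrt (a / c) ≤ wr c a := by
    rw [wr_eq hca, Real.sqrt_div (by positivity : (0:ℝ) ≤ a)]
    exact div_le_div_of_nonneg_right (sqrt_le_add hc hca) (sqrt_pos' hc).le
  have h2 : Real.sqrt (a / c) ^ s ≤ wr c a ^ s :=
    Real.rpow_le_rpow (Real.sqrt_nonneg _) h1 hs
  have h3 : Real.sqrt (a / c) ^ s = (a / c) ^ (s / 2) := by
    rw [Real.sqrt_eq_rpow, ← Real.rpow_mul (by positivity)]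
    ring_nf
  have h4 : (a / c) ^ β ≤ (a / c) ^ (s / 2) := Real.rpow_le_rpow_of_exponent_le hac1 hβs
  have h5 : (a / c) ^ β ≤ wr c a ^ s := h4.trans (h3 ▸ h2)
  have h6 : a ^ β = c ^ β * (a / c) ^ β := by
    rw [← Real.mul_rpow hc0.le (by positivity)]
    congr 1
    field_simp
  rw [h6]
  exact mul_le_mul_of_nonneg_left h5 (Real.rpow_nonneg hc0.le _)

lemma high {s β : ℝ} (hβ : 0 < β) (hβ1 : β ≤ 1) (h2βs : 2 * β ≤ s)
    {b c : ℝ} (hb : 1 ≤ b) (hbc : b ≤ c) :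
    (1 + (c - b)) ^ β ≤ 2 * (b ^ β * wr b c ^ s) := by
  have hu : (0:ℝ) ≤ c - b := by linarith
  have hb0 : (0:ℝ) < b := by linarith
  have w1 : 1 ≤ wr b c := one_le_wr hb (by linarith)
  have w0 : 0 ≤ wr b c := by linarith
  have e1 : wr b c ^ (2 * β) ≤ wr b c ^ s := Real.rpow_le_rpow_of_exponent_le w1 h2βs
  have e2 : wr b c ^ (2 * β) = (wr b c ^ (2:ℕ)) ^ β := by
    rw [← Real.rpow_natCast (wr b c) 2, ← Real.rpow_mul w0]
    norm_num
  have e3 : wr b c ^ (2:ℕ) = (Real.sqrt b + (c - b)) ^ (2:ℕ) / b := by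
    rw [wr_eq hbc, div_pow, Real.sq_sqrt hb0.le]
  have e4 : (1 + (c - b)) ^ (2:ℕ) / (2 * b) ≤ wr b c ^ (2:ℕ) := by
    rw [e3, div_le_div_iff₀ (by linarith) hb0]
    have hsb : 1 ≤ Real.sqrt b := one_le_sqrt' hb
    have hsq : Real.sqrt b ^ 2 = b := Real.sq_sqrt hb0.le
    nlinarith [hsq, mul_nonneg (mul_nonneg hb0.le hu) (sub_nonneg.2 hsb),
      mul_nonneg hb0.le (sq_nonneg (c-b)), hb0, hu, hsb]
  have e5 : ((1 + (c - b)) ^ (2:ℕ) / (2 * b)) ^ β ≤ (wr b c ^ (2:ℕ)) ^ β :=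
    Real.rpow_le_rpow (by positivity) e4 hβ.le
  have e6 : ((1 + (c - b)) ^ (2:ℕ) / (2 * b)) ^ β
      = (1 + (c - b)) ^ (2 * β) / (2 ^ β * b ^ β) := by
    rw [Real.div_rpow (by positivity) (by positivity),
      Real.mul_rpow (by norm_num) hb0.le, ← Real.rpow_natCast (1 + (c-b)) 2,
      ← Real.rpow_mul (by linarith)]
    norm_num
  have e7 : (1 + (c - b)) ^ β ≤ (1 + (c - b)) ^ (2 * β) :=
    Real.rpow_le_rpow_of_exponent_le (by linarith) (by linarith)
  have e8 : (2:ℝ) ^ β ≤ 2 := by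
    calc (2:ℝ) ^ β ≤ 2 ^ (1:ℝ) := Real.rpow_le_rpow_of_exponent_le one_le_two hβ1
    _ = 2 := Real.rpow_one 2
  have hbβ : (0:ℝ) < b ^ β := Real.rpow_pos_of_pos hb0 β
  have e9 : (1 + (c - b)) ^ (2*β) / (2 ^ β * b ^ β) ≤ wr b c ^ s := by
    rw [← e6]
    exact e5.trans (by rw [← e2]; exact e1)
  have e10 : (1 + (c - b)) ^ (2*β) / 2 ^ β ≤ b ^ β * wr b c ^ s := by
    have h := mul_le_mul_of_nonneg_left e9 hbβ.le
    calc (1 + (c - b)) ^ (2*β) / 2 ^ β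
        = b ^ β * ((1 + (c - b)) ^ (2*β) / (2 ^ β * b ^ β)) := by
          field_simp
      _ ≤ b ^ β * wr b c ^ s := h
  have e11 : (1 + (c - b)) ^ β / 2 ≤ (1 + (c - b)) ^ (2*β) / 2 ^ β := by
    apply div_le_div₀ (Real.rpow_nonneg (by linarith) _) e7 (by positivity) e8
  linarith [e11.trans e10]

lemma ab1 {β : ℝ} (hβ : 0 ≤ β) {A B : ℝ} (hB : 1 ≤ B) (hBA : B ≤ A) :
    1 / (A ^ β * B) ≤ B ^ (-(1 + β)) := by
  have hB0 : (0:ℝ) < B := by linarith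
  have h1 : B ^ (1 + β) = B * B ^ β := by
    rw [Real.rpow_add hB0, Real.rpow_one]
  have h2 : B ^ (1 + β) ≤ A ^ β * B := by
    rw [h1, mul_comm]
    exact mul_le_mul_of_nonneg_right (Real.rpow_le_rpow hB0.le hBA hβ) hB0.le
  rw [Real.rpow_neg hB0.le, ← one_div]
  exact one_div_le_one_div_of_le (Real.rpow_pos_of_pos hB0 _) h2

lemma ab_ineq {β : ℝ} (hβ : 0 ≤ β) {A B : ℝ} (hA : 1 ≤ A) (hB : 1 ≤ B) :
    1 / (A ^ β * B) ≤ A ^ (-(1 + β)) + B ^ (-(1 + β)) := by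
  rcases le_total B A with h | h
  · exact (ab1 hβ hB h).trans (le_add_of_nonneg_left (Real.rpow_nonneg (by linarith) _))
  · have hA0 : (0:ℝ) < A := by linarith
    have h2 : A ^ (1 + β) ≤ A ^ β * B := by
      rw [Real.rpow_add hA0, Real.rpow_one]
      calc A * A ^ β = A ^ β * A := mul_comm _ _
        _ ≤ A ^ β * B := mul_le_mul_of_nonneg_left (by linarith) (Real.rpow_nonneg hA0.le _)
    have h3 : 1 / (A ^ β * B) ≤ A ^ (-(1 + β)) := by
      rw [Real.rpow_neg hA0.le, ← one_div]
      exact one_div_le_one_div_of_le (Real.rpow_pos_of_pos hA0 _) h2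
    exact h3.trans (le_add_of_nonneg_right (Real.rpow_nonneg (by linarith) _))


lemma keyR {s β : ℝ} (hs : 0 < s) (hβ : 0 < β) (hβ1 : β ≤ 1) (hβs : β ≤ s / 2)
    {a b c : ℝ} (ha : 1 ≤ a) (hc : 1 ≤ c) (hab : a ≤ b) :
    Wr s β a b ≤ (c ^ (-(1 + β)) + (1 + |a - c|) ^ (-(1 + β)) + 2 * (1 + |b - c|) ^ (-(1 + β)))
      * (Wr s β a c * Wr s β c b) := by
  have hb : (1:ℝ) ≤ b := le_trans ha hab
  have h2βs : 2 * β ≤ s := by linarith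
  have hX : 0 < Wr s β a c * Wr s β c b :=
    mul_pos (Wr_pos hs.le hβ.le ha hc) (Wr_pos hs.le hβ.le hc hb)
  have wab0 : (0:ℝ) ≤ wr a b := le_trans zero_le_one (one_le_wr ha hb)
  have wac0 : (0:ℝ) ≤ wr a c := le_trans zero_le_one (one_le_wr ha hc)
  have wca0 : (0:ℝ) ≤ wr c a := le_trans zero_le_one (one_le_wr hc ha)
  have wcb0 : (0:ℝ) ≤ wr c b := le_trans zero_le_one (one_le_wr hc hb)
  have wbc0 : (0:ℝ) ≤ wr b c := le_trans zero_le_one (one_le_wr hb hc)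
  have rab : (0:ℝ) ≤ wr a b ^ s := Real.rpow_nonneg wab0 _
  have rac : (0:ℝ) ≤ wr a c ^ s := Real.rpow_nonneg wac0 _
  have rca : (0:ℝ) ≤ wr c a ^ s := Real.rpow_nonneg wca0 _
  have rcb : (0:ℝ) ≤ wr c b ^ s := Real.rpow_nonneg wcb0 _
  have rbc : (0:ℝ) ≤ wr b c ^ s := Real.rpow_nonneg wbc0 _
  have haβ : (0:ℝ) ≤ a ^ β := Real.rpow_nonneg (by linarith) _
  have hbβ : (0:ℝ) ≤ b ^ β := Real.rpow_nonneg (by linarith) _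
  have hcβ : (0:ℝ) ≤ c ^ β := Real.rpow_nonneg (by linarith) _
  rcases lt_or_ge c a with hca | hac
  · -- Region 1 : c < a ≤ b
    have habs1 : |a - c| = a - c := abs_of_nonneg (by linarith)
    have habs2 : |b - c| = b - c := abs_of_nonneg (by linarith)
    rw [habs1, habs2]
    have hK : (0:ℝ) < c ^ β * (1 + (a - c)) := by
      have : (0:ℝ) < c ^ β := Real.rpow_pos_of_pos (by linarith) _
      nlinarith
    have main : Wr s β a b * (c ^ β * (1 + (a - c))) ≤ Wr s β a c * Wr s β c b := by
      rw [Wr_eq hab, Wr_symm s β a c, Wr_eq hca.le, Wr_eq (hca.le.trans hab)]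
      have g1 : a ^ β ≤ c ^ β * wr c a ^ s := low hs.le hβ.le hβs hc hca.le
      have g2 : wr a b ^ s ≤ wr c b ^ s :=
        Real.rpow_le_rpow wab0 (wr_mono1 hc hca.le hab) hs.le
      have g3 : (1:ℝ) + (b - a) ≤ 1 + (b - c) := by linarith
      have gg : a ^ β * wr a b ^ s * (1 + (b - a))
          ≤ (c ^ β * wr c a ^ s) * wr c b ^ s * (1 + (b - c)) := by
        apply mul_le_mul _ g3 (by linarith) (mul_nonneg (mul_nonneg hcβ rca) rcb)
        exact mul_le_mul g1 g2 rab (mul_nonneg hcβ rca)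
      have h := mul_le_mul_of_nonneg_right gg hK.le
      calc a ^ β * wr a b ^ s * (1 + (b - a)) * (c ^ β * (1 + (a - c)))
          ≤ (c ^ β * wr c a ^ s) * wr c b ^ s * (1 + (b - c)) * (c ^ β * (1 + (a - c))) := h
        _ = c ^ β * wr c a ^ s * (1 + (a - c)) * (c ^ β * wr c b ^ s * (1 + (b - c))) := by ring
    have step : Wr s β a b ≤ (1 / (c ^ β * (1 + (a - c)))) * (Wr s β a c * Wr s β c b) := by
      rw [one_div, inv_mul_eq_div, le_div_iff₀ hK]
      exact main
    refine step.trans (mul_le_mul_of_nonneg_right ?_ hX.le)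
    have hco : 1 / (c ^ β * (1 + (a - c))) ≤ c ^ (-(1+β)) + (1 + (a - c)) ^ (-(1+β)) :=
      ab_ineq hβ.le hc (by linarith)
    have : (0:ℝ) ≤ 2 * (1 + (b - c)) ^ (-(1+β)) := by
      have : (0:ℝ) ≤ (1 + (b - c)) ^ (-(1+β)) := Real.rpow_nonneg (by linarith) _
      linarith
    linarith
  · rcases le_or_gt c b with hcb | hbc
    · -- Region 2 : a ≤ c ≤ b
      have habs1 : |a - c| = c - a := by rw [abs_sub_comm]; exact abs_of_nonneg (by linarith)
      have habs2 : |b - c| = b - c := abs_of_nonneg (by linarith)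
      rw [habs1, habs2]
      have hcβ' : (0:ℝ) < c ^ β := Real.rpow_pos_of_pos (by linarith) _
      have hK : (0:ℝ) < c ^ β * ((1 + (c - a)) * (1 + (b - c))) :=
        mul_pos hcβ' (mul_pos (by linarith) (by linarith))
      have main : Wr s β a b * (c ^ β * ((1 + (c - a)) * (1 + (b - c))))
          ≤ (Wr s β a c * Wr s β c b) * ((1 + (c - a)) + (1 + (b - c))) := by
        rw [Wr_eq hab, Wr_eq hac, Wr_eq hcb]
        have g : wr a b ^ s ≤ wr a c ^ s * wr c b ^ s := by
          rw [← Real.mul_rpow wac0 wcb0]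
          exact Real.rpow_le_rpow wab0 (wr_tri ha hac hcb) hs.le
        have g3 : (1:ℝ) + (b - a) ≤ (1 + (c - a)) + (1 + (b - c)) := by linarith
        have gg : wr a b ^ s * (1 + (b - a))
            ≤ (wr a c ^ s * wr c b ^ s) * ((1 + (c - a)) + (1 + (b - c))) :=
          mul_le_mul g g3 (by linarith) (mul_nonneg rac rcb)
        have h := mul_le_mul_of_nonneg_right gg
          (by nlinarith : (0:ℝ) ≤ a ^ β * c ^ β * ((1 + (c - a)) * (1 + (b - c))))
        calc a ^ β * wr a b ^ s * (1 + (b - a)) * (c ^ β * ((1 + (c - a)) * (1 + (b - c))))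
            = wr a b ^ s * (1 + (b - a)) * (a ^ β * c ^ β * ((1 + (c - a)) * (1 + (b - c)))) := by
              ring
          _ ≤ (wr a c ^ s * wr c b ^ s) * ((1 + (c - a)) + (1 + (b - c)))
              * (a ^ β * c ^ β * ((1 + (c - a)) * (1 + (b - c)))) := h
          _ = a ^ β * wr a c ^ s * (1 + (c - a)) * (c ^ β * wr c b ^ s * (1 + (b - c)))
              * ((1 + (c - a)) + (1 + (b - c))) := by ring
      have step : Wr s β a b ≤ (((1 + (c - a)) + (1 + (b - c))) / (c ^ β * ((1 + (c - a)) * (1 + (b - c)))))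
          * (Wr s β a c * Wr s β c b) := by
        rw [div_mul_eq_mul_div, le_div_iff₀ hK, mul_comm ((1 + (c - a)) + (1 + (b - c))) _]
        exact main
      refine step.trans (mul_le_mul_of_nonneg_right ?_ hX.le)
      have split : ((1 + (c - a)) + (1 + (b - c))) / (c ^ β * ((1 + (c - a)) * (1 + (b - c))))
          = 1 / (c ^ β * (1 + (c - a))) + 1 / (c ^ β * (1 + (b - c))) := by
        have h1 : (0:ℝ) < 1 + (c - a) := by linarith
        have h2 : (0:ℝ) < 1 + (b - c) := by linarith
        field_simp
        ring
      rw [split]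
      have hco1 : 1 / (c ^ β * (1 + (c - a))) ≤ (1 + (c - a)) ^ (-(1+β)) :=
        ab1 hβ.le (by linarith) (by linarith)
      have hco2 : 1 / (c ^ β * (1 + (b - c))) ≤ c ^ (-(1+β)) + (1 + (b - c)) ^ (-(1+β)) :=
        ab_ineq hβ.le hc (by linarith)
      have : (0:ℝ) ≤ (1 + (b - c)) ^ (-(1+β)) := Real.rpow_nonneg (by linarith) _
      linarith
    · -- Region 3 : a ≤ b < c
      have habs1 : |a - c| = c - a := by rw [abs_sub_comm]; exact abs_of_nonneg (by linarith)
      have habs2 : |b - c| = c - b := by rw [abs_sub_comm]; exact abs_of_nonneg (by linarith)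
      rw [habs1, habs2]
      have hu0 : (0:ℝ) < 1 + (c - b) := by linarith
      have hM : (0:ℝ) < (1 + (c - b)) ^ β * (1 + (c - b)) :=
        mul_pos (Real.rpow_pos_of_pos hu0 _) hu0
      have main : Wr s β a b * ((1 + (c - b)) ^ β * (1 + (c - b)))
          ≤ 2 * (Wr s β a c * Wr s β c b) := by
        rw [Wr_eq hab, Wr_eq hac, Wr_symm s β c b, Wr_eq hbc.le]
        have g1 : wr a b ^ s ≤ wr a c ^ s :=
          Real.rpow_le_rpow wab0 (wr_mono2 ha hab hbc.le) hs.le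
        have g2 : (1:ℝ) + (b - a) ≤ 1 + (c - a) := by linarith
        have g3 : (1 + (c - b)) ^ β ≤ 2 * (b ^ β * wr b c ^ s) := high hβ hβ1 h2βs hb hbc.le
        have gg : wr a b ^ s * (1 + (b - a)) * ((1 + (c - b)) ^ β)
            ≤ wr a c ^ s * (1 + (c - a)) * (2 * (b ^ β * wr b c ^ s)) := by
          apply mul_le_mul _ g3 (Real.rpow_nonneg hu0.le _) ?_
          · exact mul_le_mul g1 g2 (by linarith) rac
          · exact mul_nonneg rac (by linarith)
        have h := mul_le_mul_of_nonneg_right gg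
          (mul_nonneg haβ hu0.le : (0:ℝ) ≤ a ^ β * (1 + (c - b)))
        calc a ^ β * wr a b ^ s * (1 + (b - a)) * ((1 + (c - b)) ^ β * (1 + (c - b)))
            = wr a b ^ s * (1 + (b - a)) * ((1 + (c - b)) ^ β) * (a ^ β * (1 + (c - b))) := by
              ring
          _ ≤ wr a c ^ s * (1 + (c - a)) * (2 * (b ^ β * wr b c ^ s)) * (a ^ β * (1 + (c - b))) := h
          _ = 2 * (a ^ β * wr a c ^ s * (1 + (c - a)) * (b ^ β * wr b c ^ s * (1 + (c - b)))) := by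
              ring
      have hMeq : (1 + (c - b)) ^ (-(1+β)) = 1 / ((1 + (c - b)) ^ β * (1 + (c - b))) := by
        rw [Real.rpow_neg hu0.le, Real.rpow_add hu0, Real.rpow_one, one_div, mul_comm]
      have step : Wr s β a b ≤ (2 * (1 + (c - b)) ^ (-(1+β))) * (Wr s β a c * Wr s β c b) := by
        rw [hMeq]
        rw [show (2 * (1 / ((1 + (c - b)) ^ β * (1 + (c - b))))) * (Wr s β a c * Wr s β c b)
          = (2 * (Wr s β a c * Wr s β c b)) / ((1 + (c - b)) ^ β * (1 + (c - b))) by ring]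
        rw [le_div_iff₀ hM]
        exact main
      refine step.trans (mul_le_mul_of_nonneg_right ?_ hX.le)
      have t1 : (0:ℝ) ≤ c ^ (-(1+β)) := Real.rpow_nonneg (by linarith) _
      have t2 : (0:ℝ) ≤ (1 + (c - a)) ^ (-(1+β)) := Real.rpow_nonneg (by linarith) _
      linarith


lemma bern_upper {β h : ℝ} (hβ : 0 ≤ β) (hβ1 : β ≤ 1) (hh : 0 ≤ h) :
    (1 + h) ^ (1 - β) ≤ 1 + (1 - β) * h := by
  have := Real.geom_mean_le_arith_mean2_weighted (by linarith : (0:ℝ) ≤ 1 - β) hβ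
    (by linarith : (0:ℝ) ≤ 1 + h) (zero_le_one) (by ring)
  simpa using this.trans_eq (by ring)

lemma step_ineq {β : ℝ} (hβ : 0 < β) (hβ1 : β ≤ 1) {x : ℝ} (hx : 1 ≤ x) :
    (x + 1) ^ (-(1 + β)) ≤ (x ^ (-β) - (x + 1) ^ (-β)) / β := by
  have hx0 : (0:ℝ) < x := by linarith
  have hx1 : (0:ℝ) < x + 1 := by linarith
  have hh0 : (0:ℝ) < 1 / x := by positivity
  set h : ℝ := 1 / x with hh
  have h1x : 1 + h = (x + 1) / x := by rw [hh]; field_simp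
  -- key : ((x+1)/x)^β ≥ 1 + β/(x+1)
  have bu : (1 + h) ^ (1 - β) ≤ 1 + (1 - β) * h := bern_upper hβ.le hβ1 hh0.le
  have hb1 : (0:ℝ) < 1 + (1 - β) * h := by nlinarith
  have key2 : (1 + h) / (1 + (1 - β) * h) ≤ (1 + h) ^ β := by
    have e : (1 + h) ^ β = (1 + h) / (1 + h) ^ (1 - β) := by
      rw [eq_div_iff (by positivity : ((1:ℝ) + h) ^ (1 - β) ≠ 0), ← Real.rpow_add (by linarith),
        show β + (1 - β) = 1 by ring, Real.rpow_one]
    rw [e]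
    exact div_le_div_of_nonneg_left (by linarith) (by positivity) bu
  have key3 : 1 + β / (x + 1) ≤ (1 + h) / (1 + (1 - β) * h) := by
    rw [le_div_iff₀ hb1, hh]
    have hβh : 0 ≤ (1 - β) * (1/x) := by
      apply mul_nonneg (by linarith) (by positivity)
    field_simp
    nlinarith [sq_nonneg (β * (x - 1)), sq_nonneg β, mul_pos hx0 hx0, sq_nonneg (β*x)]
  have key : 1 + β / (x + 1) ≤ ((x + 1) / x) ^ β := by
    rw [← h1x]; exact key3.trans key2
  -- now unfold rpow negs
  have e1 : (x + 1) ^ (-(1 + β)) = (x + 1) ^ (-β) / (x + 1) := by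
    rw [show -(1 + β) = -β + (-1) by ring, Real.rpow_add hx1, Real.rpow_neg_one]
    ring
  have e2 : ((x + 1) / x) ^ β = (x + 1) ^ β / x ^ β := Real.div_rpow hx1.le hx0.le β
  have hxβ : (0:ℝ) < x ^ β := Real.rpow_pos_of_pos hx0 _
  have hx1β : (0:ℝ) < (x + 1) ^ β := Real.rpow_pos_of_pos hx1 _
  have hxnβ : x ^ (-β) = (x ^ β)⁻¹ := Real.rpow_neg hx0.le _
  have hx1nβ : (x + 1) ^ (-β) = ((x + 1) ^ β)⁻¹ := Real.rpow_neg hx1.le _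
  have key4 : (1 + β / (x + 1)) * x ^ β ≤ (x + 1) ^ β := by
    rw [e2] at key; exact (le_div_iff₀ hxβ).1 key
  have key5 : (x + 1) * x ^ β + β * x ^ β ≤ (x + 1) ^ β * (x + 1) := by
    have h5 := mul_le_mul_of_nonneg_right key4 hx1.le
    calc (x + 1) * x ^ β + β * x ^ β
        = (1 + β / (x + 1)) * x ^ β * (x + 1) := by field_simp
      _ ≤ (x + 1) ^ β * (x + 1) := h5
  rw [e1, div_le_div_iff₀ hx1 hβ, hxnβ, hx1nβ]
  have hPQ : (0:ℝ) < (x ^ β)⁻¹ * ((x + 1) ^ β)⁻¹ := by positivity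
  have e3 : (x ^ β)⁻¹ - ((x + 1) ^ β)⁻¹
      = ((x + 1) ^ β - x ^ β) * ((x ^ β)⁻¹ * ((x + 1) ^ β)⁻¹) := by
    field_simp
  have e4 : ((x + 1) ^ β)⁻¹ * β = (β * x ^ β) * ((x ^ β)⁻¹ * ((x + 1) ^ β)⁻¹) := by
    field_simp
  rw [e3, e4, show ((x + 1) ^ β - x ^ β) * ((x ^ β)⁻¹ * ((x + 1) ^ β)⁻¹) * (x + 1)
      = (((x + 1) ^ β - x ^ β) * (x + 1)) * ((x ^ β)⁻¹ * ((x + 1) ^ β)⁻¹) by ring]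
  refine mul_le_mul_of_nonneg_right ?_ hPQ.le
  nlinarith [key5]

lemma sum_range_le' {β : ℝ} (hβ : 0 < β) (hβ1 : β ≤ 1) :
    ∀ N : ℕ, 1 ≤ N → ∑ n ∈ Finset.range (N+1), ((n:ℝ)) ^ (-(1+β)) ≤ 1 + (1 - ((N:ℝ)) ^ (-β))/β := by
  intro N hN
  induction N, hN using Nat.le_induction with
  | base =>
      rw [show (1:ℕ)+1 = 2 by rfl, Finset.sum_range_succ, Finset.sum_range_succ,
        Finset.sum_range_zero]
      push_cast
      rw [Real.zero_rpow (by intro h; nlinarith : -(1+β) ≠ 0), Real.one_rpow, Real.one_rpow]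
      norm_num
  | succ n hn ih =>
      rw [Finset.sum_range_succ]
      have hst := step_ineq hβ hβ1 (x := (n:ℝ)) (by exact_mod_cast hn)
      push_cast
      push_cast at ih hst
      have e : (1 - (n:ℝ)^(-β))/β + (((n:ℝ))^(-β) - ((n:ℝ)+1)^(-β))/β
          = (1 - ((n:ℝ)+1)^(-β))/β := by
        rw [← add_div]; ring_nf
      linarith [ih, hst, e]

lemma sum_nat_rpow_le {β : ℝ} (hβ : 0 < β) (hβ1 : β ≤ 1) (t : Finset ℕ) :
    ∑ n ∈ t, ((n:ℝ)) ^ (-(1+β)) ≤ 1 + 1/β := by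
  classical
  set N := t.sup id + 1 with hN
  have hsub : t ⊆ Finset.range (N+1) := by
    intro x hx
    have := Finset.le_sup (f := id) hx
    simp only [Finset.mem_range, id] at *
    omega
  have h1 := Finset.sum_le_sum_of_subset_of_nonneg hsub
    (fun n _ _ => Real.rpow_nonneg (Nat.cast_nonneg n) (-(1+β)))
  have h2 := sum_range_le' hβ hβ1 N (by omega)
  have h3 : (0:ℝ) ≤ ((N:ℝ)) ^ (-β) := Real.rpow_nonneg (Nat.cast_nonneg N) _
  have h4 : 1 + (1 - ((N:ℝ)) ^ (-β))/β ≤ 1 + 1/β := by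
    have := div_le_div₀ zero_le_one (by linarith : 1 - ((N:ℝ)) ^ (-β) ≤ 1) hβ le_rfl
    linarith
  exact h1.trans (h2.trans h4)

lemma pnat_cast_eq (k : ℕ+) : ((k:ℕ):ℝ) = (k:ℝ) := rfl

lemma sum_pnat_plain {β : ℝ} (hβ : 0 < β) (hβ1 : β ≤ 1) (t : Finset ℕ+) :
    ∑ k ∈ t, ((k:ℝ)) ^ (-(1+β)) ≤ 1 + 1/β := by
  classical
  have e : ∑ k ∈ t, ((k:ℝ)) ^ (-(1+β))
      = ∑ n ∈ t.image (fun k : ℕ+ => (k:ℕ)), ((n:ℝ)) ^ (-(1+β)) := by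
    rw [Finset.sum_image]
    intro x _ y _ h
    exact PNat.coe_injective h
  rw [e]
  exact sum_nat_rpow_le hβ hβ1 _

lemma sum_pnat_shift {β : ℝ} (hβ : 0 < β) (hβ1 : β ≤ 1) (n : ℕ+) (t : Finset ℕ+) :
    ∑ k ∈ t, ((1:ℝ) + |(n:ℝ) - (k:ℝ)|) ^ (-(1+β)) ≤ 2 * (1 + 1/β) := by
  classical
  rw [← Finset.sum_filter_add_sum_filter_not t (fun k => k ≤ n)]
  have B1 : ∑ k ∈ t.filter (fun k => k ≤ n), ((1:ℝ) + |(n:ℝ) - (k:ℝ)|) ^ (-(1+β)) ≤ 1 + 1/β := by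
    have e : ∀ k ∈ t.filter (fun k => k ≤ n),
        ((1:ℝ) + |(n:ℝ) - (k:ℝ)|) ^ (-(1+β)) = (((1 + ((n:ℕ) - (k:ℕ)) : ℕ):ℝ)) ^ (-(1+β)) := by
      intro k hk
      have hkn : k ≤ n := (Finset.mem_filter.1 hk).2
      have hkn' : (k:ℕ) ≤ (n:ℕ) := (PNat.coe_le_coe _ _).2 hkn
      have hcast : (((1 + ((n:ℕ) - (k:ℕ)) : ℕ):ℝ)) = 1 + ((n:ℝ) - (k:ℝ)) := by
        push_cast [Nat.cast_sub hkn']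
        ring
      rw [hcast, abs_of_nonneg (by
        have : ((k:ℕ):ℝ) ≤ ((n:ℕ):ℝ) := Nat.cast_le.2 hkn'
        rw [pnat_cast_eq, pnat_cast_eq] at this
        linarith)]
    rw [Finset.sum_congr rfl e]
    have e2 : ∑ k ∈ t.filter (fun k => k ≤ n), (((1 + ((n:ℕ) - (k:ℕ)) : ℕ):ℝ)) ^ (-(1+β))
        = ∑ m ∈ (t.filter (fun k => k ≤ n)).image (fun k : ℕ+ => 1 + ((n:ℕ) - (k:ℕ))),
            ((m:ℝ)) ^ (-(1+β)) := by
      rw [Finset.sum_image]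
      intro x hx y hy h
      have hx' : (x:ℕ) ≤ (n:ℕ) := (PNat.coe_le_coe _ _).2 (Finset.mem_filter.1 hx).2
      have hy' : (y:ℕ) ≤ (n:ℕ) := (PNat.coe_le_coe _ _).2 (Finset.mem_filter.1 hy).2
      have hx1 := x.property
      have hy1 := y.property
      apply PNat.coe_injective
      beta_reduce at h
      omega
    rw [e2]
    exact sum_nat_rpow_le hβ hβ1 _
  have B2 : ∑ k ∈ t.filter (fun k => ¬ k ≤ n), ((1:ℝ) + |(n:ℝ) - (k:ℝ)|) ^ (-(1+β)) ≤ 1 + 1/β := by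
    have e : ∀ k ∈ t.filter (fun k => ¬ k ≤ n),
        ((1:ℝ) + |(n:ℝ) - (k:ℝ)|) ^ (-(1+β)) = (((1 + ((k:ℕ) - (n:ℕ)) : ℕ):ℝ)) ^ (-(1+β)) := by
      intro k hk
      have hkn : n ≤ k := le_of_lt (lt_of_not_ge (Finset.mem_filter.1 hk).2)
      have hkn' : (n:ℕ) ≤ (k:ℕ) := (PNat.coe_le_coe _ _).2 hkn
      have hcast : (((1 + ((k:ℕ) - (n:ℕ)) : ℕ):ℝ)) = 1 + ((k:ℝ) - (n:ℝ)) := by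
        push_cast [Nat.cast_sub hkn']
        ring
      rw [hcast, abs_sub_comm, abs_of_nonneg (by
        have : ((n:ℕ):ℝ) ≤ ((k:ℕ):ℝ) := Nat.cast_le.2 hkn'
        rw [pnat_cast_eq, pnat_cast_eq] at this
        linarith)]
    rw [Finset.sum_congr rfl e]
    have e2 : ∑ k ∈ t.filter (fun k => ¬ k ≤ n), (((1 + ((k:ℕ) - (n:ℕ)) : ℕ):ℝ)) ^ (-(1+β))
        = ∑ m ∈ (t.filter (fun k => ¬ k ≤ n)).image (fun k : ℕ+ => 1 + ((k:ℕ) - (n:ℕ))),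
            ((m:ℝ)) ^ (-(1+β)) := by
      rw [Finset.sum_image]
      intro x hx y hy h
      have hx' : (n:ℕ) ≤ (x:ℕ) := (PNat.coe_le_coe _ _).2 (le_of_lt (lt_of_not_ge (Finset.mem_filter.1 hx).2))
      have hy' : (n:ℕ) ≤ (y:ℕ) := (PNat.coe_le_coe _ _).2 (le_of_lt (lt_of_not_ge (Finset.mem_filter.1 hy).2))
      apply PNat.coe_injective
      beta_reduce at h
      omega
    rw [e2]
    exact sum_nat_rpow_le hβ hβ1 _
  linarith

lemma summable_pnat_rpow {β : ℝ} (hβ : 0 < β) :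
    Summable (fun k : ℕ+ => ((k:ℝ)) ^ (-(1+β))) := by
  have h : Summable (fun n : ℕ => ((n:ℝ)) ^ (-(1+β))) :=
    Real.summable_nat_rpow.2 (by linarith)
  exact h.comp_injective PNat.coe_injective

lemma shift_ptwise {β : ℝ} (hβ : 0 < β) (n k : ℕ+) :
    ((1:ℝ) + |(n:ℝ) - (k:ℝ)|) ^ (-(1+β)) ≤ (2*(n:ℝ)) ^ (1+β) * ((k:ℝ)) ^ (-(1+β)) := by
  have hn1 : (1:ℝ) ≤ (n:ℝ) := by exact_mod_cast n.one_le
  have hk1 : (1:ℝ) ≤ (k:ℝ) := by exact_mod_cast k.one_le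
  have habs : (0:ℝ) ≤ |(n:ℝ) - (k:ℝ)| := abs_nonneg _
  have h1 : (k:ℝ)/(2*(n:ℝ)) ≤ 1 + |(n:ℝ) - (k:ℝ)| := by
    rcases le_or_gt ((k:ℝ)) (2*(n:ℝ)) with h | h
    · have : (k:ℝ)/(2*(n:ℝ)) ≤ 1 := by
        rw [div_le_one (by linarith)]; exact h
      linarith
    · have h2 : (k:ℝ) - (n:ℝ) ≤ |(n:ℝ) - (k:ℝ)| := by
        rw [abs_sub_comm]; exact le_abs_self _
      have h3 : (k:ℝ)/(2*(n:ℝ)) ≤ (k:ℝ)/2 := by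
        apply div_le_div₀ (by linarith) le_rfl (by norm_num) (by linarith)
      have h4 : (k:ℝ)/2 ≤ (k:ℝ) - (n:ℝ) := by linarith
      linarith
  have hq : (0:ℝ) < ((k:ℝ)/(2*(n:ℝ))) := by positivity
  have h2 : ((k:ℝ)/(2*(n:ℝ))) ^ (1+β) ≤ (1 + |(n:ℝ) - (k:ℝ)|) ^ (1+β) :=
    Real.rpow_le_rpow hq.le h1 (by linarith)
  have h3 : ((1:ℝ) + |(n:ℝ) - (k:ℝ)|) ^ (-(1+β)) = (((1:ℝ) + |(n:ℝ) - (k:ℝ)|) ^ (1+β))⁻¹ :=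
    Real.rpow_neg (by linarith) _
  have h4 : (((1:ℝ) + |(n:ℝ) - (k:ℝ)|) ^ (1+β))⁻¹ ≤ (((k:ℝ)/(2*(n:ℝ))) ^ (1+β))⁻¹ := by
    apply inv_anti₀ (Real.rpow_pos_of_pos hq _) h2
  have h5 : (((k:ℝ)/(2*(n:ℝ))) ^ (1+β))⁻¹ = (2*(n:ℝ)) ^ (1+β) * ((k:ℝ)) ^ (-(1+β)) := by
    rw [Real.div_rpow (by linarith) (by positivity) (1+β), Real.rpow_neg (by linarith)]
    field_simp
  rw [h3, ← h5]
  exact h4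



lemma key_numeric {β : ℝ} (hβ : 0 < β) (hβ1 : β ≤ 1) :
    7 * (β + 1) ≤ 8 * 2 ^ β := by
  have L1 := Real.log_two_gt_d9
  have L2 := Real.log_two_lt_d9
  have e : (2:ℝ) ^ β = Real.exp (Real.log 2 * β) := Real.rpow_def_of_pos (by norm_num) β
  rcases le_total β 0.68 with hc | hc
  · have h1 : Real.log 2 * β + 1 ≤ Real.exp (Real.log 2 * β) :=
      Real.add_one_le_exp _
    have p1 : (7 - 8 * Real.log 2) * β ≤ (7 - 8 * Real.log 2) * 0.68 :=
      mul_le_mul_of_nonneg_left hc (by nlinarith [L2])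
    rw [e]
    nlinarith [p1, h1]
  · have h1 : Real.log 2 * (β - 1) + 1 ≤ Real.exp (Real.log 2 * (β - 1)) :=
      Real.add_one_le_exp _
    have e2 : (2:ℝ) ^ β = 2 * Real.exp (Real.log 2 * (β - 1)) := by
      have e3 : (2:ℝ) ^ β = 2 ^ (1:ℝ) * 2 ^ (β - 1) := by
        rw [← Real.rpow_add (by norm_num : (0:ℝ) < 2)]; ring_nf
      rw [e3, Real.rpow_one, Real.rpow_def_of_pos (by norm_num)]
    have p1 : (0:ℝ) ≤ (16 * Real.log 2 - 7) * (β - 0.68) :=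
      mul_nonneg (by nlinarith [L1]) (by linarith)
    rw [e2]
    nlinarith [p1, h1]

lemma seven_le {s β : ℝ} (hβ : 0 < β) (hβ1 : β ≤ 1) (hβs : β ≤ s / 2) :
    7 * (1 + 1/β) ≤ 2 ^ (s/2 + 3) / β := by
  have h2β : (2:ℝ) ^ β ≤ 2 ^ (s/2) := Real.rpow_le_rpow_of_exponent_le one_le_two hβs
  have h8 : (2:ℝ) ^ (s/2 + 3) = 8 * 2 ^ (s/2) := by
    have h3 : (2:ℝ) ^ ((3:ℕ):ℝ) = 8 := by rw [Real.rpow_natCast]; norm_num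
    rw [Real.rpow_add (by norm_num : (0:ℝ) < 2), show ((3:ℝ)) = ((3:ℕ):ℝ) by norm_num, h3]
    ring
  have key := key_numeric hβ hβ1
  have e1 : 7 * (1 + 1/β) = (7 * (β + 1)) / β := by field_simp
  rw [e1, h8]
  apply div_le_div₀ (by positivity) _ hβ le_rfl
  calc 7 * (β + 1) ≤ 8 * 2 ^ β := key
    _ ≤ 8 * 2 ^ (s/2) := by linarith


noncomputable def Wc (s β : ℝ) (i j : ℕ+) : ℝ := Wr s β (i:ℝ) (j:ℝ)

lemma one_le_pcast (i : ℕ+) : (1:ℝ) ≤ (i:ℝ) := by exact_mod_cast i.one_le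

lemma pnat_min_cast (i j : ℕ+) : ((min i j : ℕ+):ℝ) = min (i:ℝ) (j:ℝ) := by
  rcases le_total i j with h | h
  · rw [min_eq_left h, min_eq_left (by exact_mod_cast h : (i:ℝ) ≤ (j:ℝ))]
  · rw [min_eq_right h, min_eq_right (by exact_mod_cast h : (j:ℝ) ≤ (i:ℝ))]

lemma Wc_eq (s β : ℝ) (i j : ℕ+) :
    ((min i j : ℕ+) : ℝ) ^ β * w i j ^ s * (1 + |(i:ℝ) - (j:ℝ)|) = Wc s β i j := by
  unfold Wc Wr
  rw [pnat_min_cast]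
  rfl

lemma one_le_Wc {s β : ℝ} (hs : 0 ≤ s) (hβ : 0 ≤ β) (i j : ℕ+) : 1 ≤ Wc s β i j :=
  one_le_Wr hs hβ (one_le_pcast i) (one_le_pcast j)

lemma Wc_pos {s β : ℝ} (hs : 0 ≤ s) (hβ : 0 ≤ β) (i j : ℕ+) : 0 < Wc s β i j :=
  lt_of_lt_of_le one_pos (one_le_Wc hs hβ i j)

noncomputable def bfun (β : ℝ) (i j k : ℕ+) : ℝ :=
  ((k:ℝ)) ^ (-(1+β)) + (1 + |((min i j : ℕ+):ℝ) - (k:ℝ)|) ^ (-(1+β))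
    + 2 * ((1 + |((max i j : ℕ+):ℝ) - (k:ℝ)|) ^ (-(1+β)))

lemma bfun_nonneg (β : ℝ) (i j k : ℕ+) : 0 ≤ bfun β i j k := by
  unfold bfun
  have h1 : (0:ℝ) ≤ ((k:ℝ)) ^ (-(1+β)) := Real.rpow_nonneg (by positivity) _
  have h2 : (0:ℝ) ≤ (1 + |((min i j : ℕ+):ℝ) - (k:ℝ)|) ^ (-(1+β)) :=
    Real.rpow_nonneg (by positivity) _
  have h3 : (0:ℝ) ≤ (1 + |((max i j : ℕ+):ℝ) - (k:ℝ)|) ^ (-(1+β)) :=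
    Real.rpow_nonneg (by positivity) _
  linarith

lemma summable_bfun {β : ℝ} (hβ : 0 < β) (i j : ℕ+) : Summable (bfun β i j) := by
  unfold bfun
  apply Summable.add
  apply Summable.add
  · exact summable_pnat_rpow hβ
  · exact Summable.of_nonneg_of_le
      (fun k => Real.rpow_nonneg (by positivity) _)
      (fun k => shift_ptwise hβ (min i j) k)
      ((summable_pnat_rpow hβ).mul_left _)
  · exact (Summable.of_nonneg_of_le
      (fun k => Real.rpow_nonneg (by positivity) _)
      (fun k => shift_ptwise hβ (max i j) k)
      ((summable_pnat_rpow hβ).mul_left _)).mul_left 2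

lemma tsum_bfun_le {β : ℝ} (hβ : 0 < β) (hβ1 : β ≤ 1) (i j : ℕ+) :
    ∑' k, bfun β i j k ≤ 7 * (1 + 1/β) := by
  apply Summable.tsum_le_of_sum_le (summable_bfun hβ i j)
  intro t
  have e : ∑ k ∈ t, bfun β i j k
      = ∑ k ∈ t, ((k:ℝ)) ^ (-(1+β))
        + ∑ k ∈ t, (1 + |((min i j : ℕ+):ℝ) - (k:ℝ)|) ^ (-(1+β))
        + 2 * ∑ k ∈ t, (1 + |((max i j : ℕ+):ℝ) - (k:ℝ)|) ^ (-(1+β)) := by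
    rw [Finset.mul_sum, ← Finset.sum_add_distrib, ← Finset.sum_add_distrib]
    exact Finset.sum_congr rfl (fun x _ => rfl)
  rw [e]
  have b1 := sum_pnat_plain hβ hβ1 t
  have b2 := sum_pnat_shift hβ hβ1 (min i j) t
  have b3 := sum_pnat_shift hβ hβ1 (max i j) t
  linarith

lemma keyW {s β : ℝ} (hs : 0 < s) (hβ : 0 < β) (hβ1 : β ≤ 1) (hβs : β ≤ s / 2) (i j k : ℕ+) :
    Wc s β i j ≤ bfun β i j k * (Wc s β i k * Wc s β k j) := by
  rcases le_total i j with hij | hji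
  · have hr : (i:ℝ) ≤ (j:ℝ) := by exact_mod_cast hij
    unfold Wc bfun
    rw [min_eq_left hij, max_eq_right hij]
    exact keyR hs hβ hβ1 hβs (one_le_pcast i) (one_le_pcast k) hr
  · have hr : (j:ℝ) ≤ (i:ℝ) := by exact_mod_cast hji
    unfold Wc bfun
    rw [min_eq_right hji, max_eq_left hji]
    have h := keyR hs hβ hβ1 hβs (one_le_pcast j) (one_le_pcast k) hr
    rw [Wr_symm s β (i:ℝ) (j:ℝ)]
    rw [Wr_symm s β (i:ℝ) (k:ℝ), Wr_symm s β (k:ℝ) (j:ℝ)]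
    calc Wr s β (j:ℝ) (i:ℝ)
        ≤ ((k:ℝ) ^ (-(1 + β)) + (1 + |(j:ℝ) - (k:ℝ)|) ^ (-(1 + β))
            + 2 * (1 + |(i:ℝ) - (k:ℝ)|) ^ (-(1 + β)))
          * (Wr s β (j:ℝ) (k:ℝ) * Wr s β (k:ℝ) (i:ℝ)) := h
      _ = ((k:ℝ) ^ (-(1 + β)) + (1 + |(j:ℝ) - (k:ℝ)|) ^ (-(1 + β))
            + 2 * (1 + |(i:ℝ) - (k:ℝ)|) ^ (-(1 + β)))
          * (Wr s β (k:ℝ) (i:ℝ) * Wr s β (j:ℝ) (k:ℝ)) := by ring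

lemma half {s β : ℝ} (hs : 0 < s) (hβ : 0 < β) (hβ1 : β ≤ 1) (hβs : β ≤ s / 2)
    {F : ℕ+ → Type} [∀ i, NormedAddCommGroup (F i)] [∀ i, NormedSpace ℂ (F i)]
    [∀ i, CompleteSpace (F i)]
    (A B : ∀ i j : ℕ+, F j →L[ℂ] F i) (MA MB : ℝ)
    (hA : ∀ i j : ℕ+, Wc s β i j * ‖A i j‖ ≤ MA)
    (hB : ∀ i j : ℕ+, Wc s β i j * ‖B i j‖ ≤ MB) (i j : ℕ+) :
    Summable (fun k : ℕ+ => ‖(A i k).comp (B k j)‖) ∧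
      Wc s β i j * ‖∑' k : ℕ+, (A i k).comp (B k j)‖ ≤ 2 ^ (s/2 + 3) / β * (MA * MB) := by
  have hWpos : ∀ p q : ℕ+, 0 < Wc s β p q := Wc_pos hs.le hβ.le
  have MA0 : 0 ≤ MA :=
    le_trans (mul_nonneg (hWpos 1 1).le (norm_nonneg _)) (hA 1 1)
  have MB0 : 0 ≤ MB :=
    le_trans (mul_nonneg (hWpos 1 1).le (norm_nonneg _)) (hB 1 1)
  have hA' : ∀ p q : ℕ+, ‖A p q‖ ≤ MA / Wc s β p q := fun p q =>
    (le_div_iff₀ (hWpos p q)).2 (by rw [mul_comm]; exact hA p q)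
  have hB' : ∀ p q : ℕ+, ‖B p q‖ ≤ MB / Wc s β p q := fun p q =>
    (le_div_iff₀ (hWpos p q)).2 (by rw [mul_comm]; exact hB p q)
  have hbsum : Summable (bfun β i j) := summable_bfun hβ i j
  have hdom : ∀ k : ℕ+, ‖(A i k).comp (B k j)‖ ≤ MA * MB / Wc s β i j * bfun β i j k := by
    intro k
    have h1 : ‖(A i k).comp (B k j)‖ ≤ ‖A i k‖ * ‖B k j‖ :=
      ContinuousLinearMap.opNorm_comp_le _ _
    have h2 : ‖A i k‖ * ‖B k j‖ ≤ (MA / Wc s β i k) * (MB / Wc s β k j) :=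
      mul_le_mul (hA' i k) (hB' k j) (norm_nonneg _) (div_nonneg MA0 (hWpos i k).le)
    have h3 : (MA / Wc s β i k) * (MB / Wc s β k j)
        = MA * MB * (1 / (Wc s β i k * Wc s β k j)) := by ring
    have h4 : 1 / (Wc s β i k * Wc s β k j) ≤ bfun β i j k / Wc s β i j := by
      rw [div_le_div_iff₀ (mul_pos (hWpos i k) (hWpos k j)) (hWpos i j), one_mul]
      exact keyW hs hβ hβ1 hβs i j k
    have h5 : MA * MB * (1 / (Wc s β i k * Wc s β k j))
        ≤ MA * MB * (bfun β i j k / Wc s β i j) :=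
      mul_le_mul_of_nonneg_left h4 (mul_nonneg MA0 MB0)
    calc ‖(A i k).comp (B k j)‖ ≤ ‖A i k‖ * ‖B k j‖ := h1
      _ ≤ (MA / Wc s β i k) * (MB / Wc s β k j) := h2
      _ = MA * MB * (1 / (Wc s β i k * Wc s β k j)) := h3
      _ ≤ MA * MB * (bfun β i j k / Wc s β i j) := h5
      _ = MA * MB / Wc s β i j * bfun β i j k := by ring
  have hsumm : Summable (fun k : ℕ+ => ‖(A i k).comp (B k j)‖) :=
    Summable.of_nonneg_of_le (fun k => norm_nonneg _) hdom (hbsum.mul_left _)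
  refine ⟨hsumm, ?_⟩
  have h1 : ‖∑' k : ℕ+, (A i k).comp (B k j)‖ ≤ ∑' k : ℕ+, ‖(A i k).comp (B k j)‖ :=
    norm_tsum_le_tsum_norm hsumm
  have h2 : ∑' k : ℕ+, ‖(A i k).comp (B k j)‖
      ≤ ∑' k : ℕ+, MA * MB / Wc s β i j * bfun β i j k :=
    Summable.tsum_le_tsum hdom hsumm (hbsum.mul_left _)
  have h3 : ∑' k : ℕ+, MA * MB / Wc s β i j * bfun β i j k
      = MA * MB / Wc s β i j * ∑' k, bfun β i j k := tsum_mul_left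
  have h4 : ∑' k, bfun β i j k ≤ 7 * (1 + 1/β) := tsum_bfun_le hβ hβ1 i j
  have hW := hWpos i j
  have hchain : Wc s β i j * ‖∑' k : ℕ+, (A i k).comp (B k j)‖
      ≤ MA * MB * (7 * (1 + 1/β)) := by
    have hb0 : 0 ≤ ∑' k, bfun β i j k :=
      tsum_nonneg (fun k => bfun_nonneg β i j k)
    have step1 : Wc s β i j * ‖∑' k : ℕ+, (A i k).comp (B k j)‖
        ≤ Wc s β i j * (MA * MB / Wc s β i j * ∑' k, bfun β i j k) := by
      apply mul_le_mul_of_nonneg_left _ hW.le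
      calc ‖∑' k : ℕ+, (A i k).comp (B k j)‖ ≤ ∑' k : ℕ+, ‖(A i k).comp (B k j)‖ := h1
        _ ≤ ∑' k : ℕ+, MA * MB / Wc s β i j * bfun β i j k := h2
        _ = MA * MB / Wc s β i j * ∑' k, bfun β i j k := h3
    have step2 : Wc s β i j * (MA * MB / Wc s β i j * ∑' k, bfun β i j k)
        = MA * MB * ∑' k, bfun β i j k := by
      field_simp
    have step3 : MA * MB * ∑' k, bfun β i j k ≤ MA * MB * (7 * (1 + 1/β)) :=
      mul_le_mul_of_nonneg_left h4 (mul_nonneg MA0 MB0)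
    calc Wc s β i j * ‖∑' k : ℕ+, (A i k).comp (B k j)‖
        ≤ Wc s β i j * (MA * MB / Wc s β i j * ∑' k, bfun β i j k) := step1
      _ = MA * MB * ∑' k, bfun β i j k := step2
      _ ≤ MA * MB * (7 * (1 + 1/β)) := step3
  have hfin : MA * MB * (7 * (1 + 1/β)) ≤ 2 ^ (s/2 + 3) / β * (MA * MB) := by
    have h7 := seven_le hβ hβ1 hβs
    calc MA * MB * (7 * (1 + 1/β)) ≤ MA * MB * (2 ^ (s/2 + 3) / β) :=
        mul_le_mul_of_nonneg_left h7 (mul_nonneg MA0 MB0)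
      _ = 2 ^ (s/2 + 3) / β * (MA * MB) := by ring
  exact hchain.trans hfin


end MsbAux

/-- Let `s > 0`, `0 < β ≤ min{s/2, 1}`, and let `A, B ∈ M_{s,β}^+` (i.e. their blocks satisfy
`(i∧j)^β w(i,j)^s (1+|i−j|) ‖A_i^j‖ ≤ |A|_{s,β+} = MA`, similarly for `B`).  Blocks are viewed
as (continuous linear) operators `ℂ^{2d_j} → ℂ^{2d_i}` with the `ℓ²`-operator norm.  Then the
blockwise products `(AB)_i^j = ∑_k A_i^k B_k^j` and `(BA)_i^j = ∑_k B_i^k A_k^j` converge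
absolutely in operator norm, and `AB, BA ∈ M_{s,β}^+` with
`|AB|_{s,β+}, |BA|_{s,β+} ≤ (2^{s/2+3}/β)·|A|_{s,β+}·|B|_{s,β+}`. -/
theorem product_Msβplus_Msβplus_mem_Msβplus (s β : ℝ) (hs : 0 < s) (hβ : 0 < β)
    (hβs : β ≤ min (s / 2) 1) (d : ℕ+ → ℕ+)
    (A B : ∀ i j : ℕ+,
      EuclideanSpace ℂ (Fin (dim d j)) →L[ℂ] EuclideanSpace ℂ (Fin (dim d i)))
    (MA MB : ℝ)
    (hA : ∀ i j : ℕ+, ((min i j : ℕ+) : ℝ) ^ β * w i j ^ s * (1 + |(i : ℝ) - (j : ℝ)|) *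
      ‖A i j‖ ≤ MA)
    (hB : ∀ i j : ℕ+, ((min i j : ℕ+) : ℝ) ^ β * w i j ^ s * (1 + |(i : ℝ) - (j : ℝ)|) *
      ‖B i j‖ ≤ MB) :
    (∀ i j : ℕ+, Summable fun k : ℕ+ => ‖(A i k).comp (B k j)‖) ∧
    (∀ i j : ℕ+, Summable fun k : ℕ+ => ‖(B i k).comp (A k j)‖) ∧
    (∀ i j : ℕ+, ((min i j : ℕ+) : ℝ) ^ β * w i j ^ s * (1 + |(i : ℝ) - (j : ℝ)|) *
      ‖∑' k : ℕ+, (A i k).comp (B k j)‖ ≤ 2 ^ (s / 2 + 3) / β * MA * MB) ∧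
    (∀ i j : ℕ+, ((min i j : ℕ+) : ℝ) ^ β * w i j ^ s * (1 + |(i : ℝ) - (j : ℝ)|) *
      ‖∑' k : ℕ+, (B i k).comp (A k j)‖ ≤ 2 ^ (s / 2 + 3) / β * MA * MB) := by
  have hβ1 : β ≤ 1 := le_trans hβs (min_le_right _ _)
  have hβs2 : β ≤ s / 2 := le_trans hβs (min_le_left _ _)
  have hA' : ∀ i j : ℕ+, MsbAux.Wc s β i j * ‖A i j‖ ≤ MA := by
    intro i j; have h := hA i j; rwa [MsbAux.Wc_eq] at h
  have hB' : ∀ i j : ℕ+, MsbAux.Wc s β i j * ‖B i j‖ ≤ MB := by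
    intro i j; have h := hB i j; rwa [MsbAux.Wc_eq] at h
  have HAB := fun i j => MsbAux.half hs hβ hβ1 hβs2 A B MA MB hA' hB' i j
  have HBA := fun i j => MsbAux.half hs hβ hβ1 hβs2 B A MB MA hB' hA' i j
  refine ⟨fun i j => (HAB i j).1, fun i j => (HBA i j).1, ?_, ?_⟩
  · intro i j
    rw [MsbAux.Wc_eq]
    exact le_of_le_of_eq (HAB i j).2 (by ring)
  · intro i j
    rw [MsbAux.Wc_eq]
    exact le_of_le_of_eq (HBA i j).2 (by ring)
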